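/- Let T₁ and T₂ be 𝒜-trees and let T̄₁ = T₁|(𝒜(T₁) ∩ 𝒜(T₂)) and T̄₂ = T₂|(𝒜(T₁) ∩ 𝒜(T₂)). Then T₁ and T₂ are ancestrally compatible if and only if T̄₁ and T̄₂ are ancestrally compatible. -/

import Mathlib

/-!
Common framework: rooted labeled trees ("𝒜-trees") following Llabrés–Rocha–Rosselló–Valiente.

A `PreTree α V` is the raw data of a directed graph on (a finite subset of) `V` together with
a partial labeling of its nodes by labels in `α`.  The predicate `PreTree.IsATree` asserts that
this data is a finite rooted tree (the root reaches every node by a unique directed path),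
that the labeling is injective, and that every leaf is labeled.
-/

structure PreTree (α : Type) (V : Type) where
  nodes : Set V
  arc : V → V → Prop
  label : V → Option α

namespace PreTree

variable {α V W : Type}

/-- There is a directed path from `u` to `v` (possibly trivial). -/
def path (T : PreTree α V) (u v : V) : Prop := Relation.ReflTransGen T.arc u v

/-- There is a non-trivial directed path (length ≥ 1) from `u` to `v`. -/
def pathNT (T : PreTree α V) (u v : V) : Prop := Relation.TransGen T.arc u v

/-- `𝒜(T)`: the set of labels of all nodes of `T`. -/
def labelSet (T : PreTree α V) : Set α := {a | ∃ v, T.label v = some a}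

/-- `𝒜_T(v)`: the cluster of `v`, i.e. the set of labels of all descendants of `v`
(including `v` itself). -/
def cluster (T : PreTree α V) (v : V) : Set α := {a | ∃ w, T.path v w ∧ T.label w = some a}

/-- `𝒞_𝒜(T)`: the cluster representation of `T`. -/
def clusterRep (T : PreTree α V) : Set (Set α) := {C | ∃ v ∈ T.nodes, T.cluster v = C}

/-- A leaf is a node without children. -/
def IsLeaf (T : PreTree α V) (v : V) : Prop := v ∈ T.nodes ∧ ∀ w, ¬ T.arc v w

/-- `ℒ(T)`: the set of labels of the leaves of `T`. -/
def leafLabels (T : PreTree α V) : Set α := {a | ∃ v, T.IsLeaf v ∧ T.label v = some a}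

/-- A node is elementary when it has exactly one child. -/
def IsElementary (T : PreTree α V) (v : V) : Prop := ∃! w, T.arc v w

/-- `T` is an 𝒜-tree: a finite rooted tree (every node reachable from the root by a unique
directed path, which is captured by unique parents, acyclicity and reachability from a root)
with an injective partial labeling such that every leaf is labeled. -/
structure IsATree (T : PreTree α V) : Prop where
  finite_nodes : T.nodes.Finite
  arc_mem_left : ∀ {u v : V}, T.arc u v → u ∈ T.nodes
  arc_mem_right : ∀ {u v : V}, T.arc u v → v ∈ T.nodes
  parent_unique : ∀ {u v w : V}, T.arc u w → T.arc v w → u = v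
  acyclic : ∀ {u v : V}, T.arc u v → ¬ T.path v u
  rooted : T.nodes.Nonempty → ∃ r ∈ T.nodes, ∀ v ∈ T.nodes, T.path r v
  label_mem : ∀ {v : V} {a : α}, T.label v = some a → v ∈ T.nodes
  label_inj : ∀ {u v : V} {a : α}, T.label u = some a → T.label v = some a → u = v
  leaf_labeled : ∀ v ∈ T.nodes, (∀ w, ¬ T.arc v w) → ∃ a, T.label v = some a

/-- A semi-labeled tree over `𝒜` is an 𝒜-tree all of whose elementary nodes are labeled. -/
def IsSemiLabeled (T : PreTree α V) : Prop :=
  T.IsATree ∧ ∀ v ∈ T.nodes, T.IsElementary v → ∃ a, T.label v = some a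

open Classical in
/-- The restriction `T|X`: the subtree of `T` induced on the nodes whose cluster meets `X`,
keeping exactly the labels that belong to `X`. -/
noncomputable def restrict (T : PreTree α V) (X : Set α) : PreTree α V where
  nodes := {v | v ∈ T.nodes ∧ (T.cluster v ∩ X).Nonempty}
  arc u v := T.arc u v ∧ (T.cluster u ∩ X).Nonempty ∧ (T.cluster v ∩ X).Nonempty
  label v := if (∃ a ∈ X, T.label v = some a) then T.label v else none

/-- A weak topological embedding `f : S → T`: an injective map on nodes which preserves labels
and preserves and reflects directed paths. -/
def IsWTE (S : PreTree α V) (T : PreTree α W) (f : V → W) : Prop :=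
  (∀ v ∈ S.nodes, f v ∈ T.nodes) ∧
  (∀ u ∈ S.nodes, ∀ v ∈ S.nodes, f u = f v → u = v) ∧
  (∀ (v : V) (a : α), S.label v = some a → T.label (f v) = some a) ∧
  (∀ u ∈ S.nodes, ∀ v ∈ S.nodes, (S.path u v ↔ T.path (f u) (f v)))

/-- Two 𝒜-trees are ancestrally compatible when they admit weak topological embeddings into
a same 𝒜-tree. -/
def AncCompat (T₁ : PreTree α V) (T₂ : PreTree α W) : Prop :=
  ∃ (U : Type) (T : PreTree α U), T.IsATree ∧ (∃ f, IsWTE T₁ T f) ∧ (∃ g, IsWTE T₂ T g)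

/-- `m` is the most recent common ancestor of `x` and `y` in `T`. -/
def IsMRCA (T : PreTree α V) (x y m : V) : Prop :=
  T.path m x ∧ T.path m y ∧ ∀ n, T.path n x → T.path n y → T.path n m

/-- Local compatibility: condition (C1) on pairs of common labels and condition (C2)
on triples of common labels. -/
def LocallyCompatible (T₁ : PreTree α V) (T₂ : PreTree α W) : Prop :=
  (∀ (a b : α) (x₁ y₁ : V) (x₂ y₂ : W),
      T₁.label x₁ = some a → T₁.label y₁ = some b →
      T₂.label x₂ = some a → T₂.label y₂ = some b →
      (T₁.path x₁ y₁ ↔ T₂.path x₂ y₂)) ∧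
  (∀ (a b c : α) (va₁ vb₁ vc₁ m₁ m₁' : V) (va₂ vb₂ vc₂ m₂ m₂' : W),
      T₁.label va₁ = some a → T₁.label vb₁ = some b → T₁.label vc₁ = some c →
      T₂.label va₂ = some a → T₂.label vb₂ = some b → T₂.label vc₂ = some c →
      IsMRCA T₁ vb₁ vc₁ m₁ → IsMRCA T₁ va₁ vb₁ m₁' →
      IsMRCA T₂ va₂ vb₂ m₂ → IsMRCA T₂ vb₂ vc₂ m₂' →
      T₁.pathNT m₁ m₁' → ¬ T₂.pathNT m₂ m₂')

/-- `T` ancestrally displays `S`. -/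
def Displays (T : PreTree α W) (S : PreTree α V) : Prop :=
  S.labelSet ⊆ T.labelSet ∧
  (∀ (a b : α) (x y : V) (x' y' : W),
      S.label x = some a → S.label y = some b →
      T.label x' = some a → T.label y' = some b →
      (S.path x y ↔ T.path x' y')) ∧
  S.clusterRep ⊆ (T.restrict S.labelSet).clusterRep

/-- An unlabeled elementary node. -/
def ElemUnlab (T : PreTree α V) (v : V) : Prop := T.label v = none ∧ T.IsElementary v

/-- The semi-labeled tree obtained from `S` by removing its unlabeled elementary nodes and
replacing by single arcs the maximal paths all of whose intermediate nodes are unlabeled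
and elementary. -/
def contract (S : PreTree α V) : PreTree α V where
  nodes := {v | v ∈ S.nodes ∧ ¬ ElemUnlab S v}
  arc u v := (u ∈ S.nodes ∧ ¬ ElemUnlab S u) ∧ (v ∈ S.nodes ∧ ¬ ElemUnlab S v) ∧
    ∃ l : List V, List.Chain' S.arc (u :: (l ++ [v])) ∧ ∀ m ∈ l, ElemUnlab S m
  label := S.label

/-- `X` is the smallest member of the family `R` containing the label `a`. -/
def SmallestContaining (R : Set (Set α)) (a : α) (X : Set α) : Prop :=
  X ∈ R ∧ a ∈ X ∧ ∀ Y ∈ R, a ∈ Y → X ⊆ Y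

/-- `m_{ℓ,Y}`: the number of nodes of `T` whose cluster is `Y`. -/
noncomputable def mcount (T : PreTree α V) (Y : Set α) : ℕ :=
  {v | v ∈ T.nodes ∧ T.cluster v = Y}.ncard

/-- `𝒞 = 𝒞_𝒜(T₁) ∪ 𝒞_𝒜(T₂)`. -/
def joinC (T₁ : PreTree α V) (T₂ : PreTree α W) : Set (Set α) :=
  T₁.clusterRep ∪ T₂.clusterRep

/-- `n_Y = max (m_{1,Y}, m_{2,Y})`. -/
noncomputable def joinN (T₁ : PreTree α V) (T₂ : PreTree α W) (Y : Set α) : ℕ :=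
  max (mcount T₁ Y) (mcount T₂ Y)

open Classical in
/-- The join `T_{1,2}` of two 𝒜-trees with the same label set: nodes are the pairs
`w_{Y,j} = (Y, j)` with `Y ∈ 𝒞` and `1 ≤ j ≤ n_Y`, with the chain arcs `(w_{Y,j}, w_{Y,j-1})`
and the arcs `(w_{Y,1}, w_{Z,n_Z})` for `Z ⊊ Y` maximal in `𝒞`, and `w_{Y,1}` labeled `A`
exactly when `Y = (⋃ {Z ∈ 𝒞 ∣ Z ⊊ Y}) ⊔ {A}`. -/
noncomputable def join (T₁ : PreTree α V) (T₂ : PreTree α W) : PreTree α (Set α × ℕ) where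
  nodes := {p | p.1 ∈ joinC T₁ T₂ ∧ 1 ≤ p.2 ∧ p.2 ≤ joinN T₁ T₂ p.1}
  arc p q := p.1 ∈ joinC T₁ T₂ ∧ q.1 ∈ joinC T₁ T₂ ∧
    ((q.1 = p.1 ∧ p.2 = q.2 + 1 ∧ 1 ≤ q.2 ∧ p.2 ≤ joinN T₁ T₂ p.1) ∨
     (p.2 = 1 ∧ q.1 ⊂ p.1 ∧ q.2 = joinN T₁ T₂ q.1 ∧ 1 ≤ q.2 ∧
       ¬ ∃ Z ∈ joinC T₁ T₂, q.1 ⊂ Z ∧ Z ⊂ p.1))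
  label p :=
    if h : p.2 = 1 ∧ p.1 ∈ joinC T₁ T₂ ∧
        ∃ a : α, a ∉ ⋃₀ {Z ∈ joinC T₁ T₂ | Z ⊂ p.1} ∧
          p.1 = (⋃₀ {Z ∈ joinC T₁ T₂ | Z ⊂ p.1}) ∪ {a}
    then some h.2.2.choose else none

/-- The canonical map `f_ℓ : V(T_ℓ) → V(T_{1,2})`, sending the `i`-th node (from the bottom)
of the chain of nodes of `T` with cluster `Y` to `w_{Y,i}`. -/
noncomputable def joinMap (T : PreTree α V) (v : V) : Set α × ℕ :=
  (T.cluster v, {u | u ∈ T.nodes ∧ T.cluster u = T.cluster v ∧ T.pathNT v u}.ncard + 1)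

end PreTree

section Stmt13Aux
open PreTree Relation Classical

variable {α V W U : Type}

lemma cluster_mono {T : PreTree α V} {u v : V} (h : T.path u v) :
    T.cluster v ⊆ T.cluster u := fun a ⟨w, hw, hl⟩ => ⟨w, h.trans hw, hl⟩

lemma restrict_path_le {T : PreTree α V} {X : Set α} {u v : V}
    (h : (T.restrict X).path u v) : T.path u v :=
  by
  unfold PreTree.path at h ⊢
  induction h with
  | refl => exact ReflTransGen.refl
  | tail _ hab ih => exact ih.tail hab.1

lemma path_restrict {T : PreTree α V} {X : Set α} {u v : V}
    (h : T.path u v) (hv : (T.cluster v ∩ X).Nonempty) : (T.restrict X).path u v := by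
  induction h using Relation.ReflTransGen.head_induction_on with
  | refl => exact ReflTransGen.refl
  | head harc hpath ih =>
    rename_i a c
    refine ReflTransGen.head ?_ ih
    refine ⟨harc, ?_, ?_⟩
    · obtain ⟨x, hx1, hx2⟩ := hv
      exact ⟨x, cluster_mono (ReflTransGen.head harc hpath) hx1, hx2⟩
    · obtain ⟨x, hx1, hx2⟩ := hv
      exact ⟨x, cluster_mono hpath hx1, hx2⟩

lemma restrict_label_eq_some {T : PreTree α V} {X : Set α} {v : V} {a : α} :
    (T.restrict X).label v = some a ↔ T.label v = some a ∧ a ∈ X := by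
  constructor
  · intro h
    simp only [PreTree.restrict] at h
    split_ifs at h with hc
    · obtain ⟨b, hb, hb2⟩ := hc
      rw [h] at hb2
      cases hb2
      exact ⟨h, hb⟩
  · rintro ⟨h1, h2⟩
    simp only [PreTree.restrict]
    rw [if_pos ⟨a, h2, h1⟩]
    exact h1

lemma restrict_labelSet_subset {T : PreTree α V} {X : Set α} :
    (T.restrict X).labelSet ⊆ X := by
  rintro a ⟨v, hv⟩
  exact (restrict_label_eq_some.1 hv).2

lemma no_pathNT_self {T : PreTree α V} (hT : T.IsATree) {u : V} : ¬ T.pathNT u u := by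
  intro h
  obtain ⟨z, hz, hp⟩ := (Relation.TransGen.head'_iff).1 h
  exact hT.acyclic hz hp

lemma isATree_restrict {T : PreTree α V} (hT : T.IsATree) {X : Set α} :
    (T.restrict X).IsATree := by
  constructor
  · exact hT.finite_nodes.subset (fun v hv => hv.1)
  · exact fun h => ⟨hT.arc_mem_left h.1, h.2.1⟩
  · exact fun h => ⟨hT.arc_mem_right h.1, h.2.2⟩
  · exact fun h h' => hT.parent_unique h.1 h'.1
  · exact fun h hp => hT.acyclic h.1 (restrict_path_le hp)
  · rintro ⟨v, hv⟩
    obtain ⟨r, hr, hrall⟩ := hT.rooted ⟨v, hv.1⟩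
    refine ⟨r, ⟨hr, ?_⟩, fun z hz => path_restrict (hrall z hz.1) hz.2⟩
    obtain ⟨x, hx1, hx2⟩ := hv.2
    exact ⟨x, cluster_mono (hrall v hv.1) hx1, hx2⟩
  · intro v a h
    obtain ⟨h1, h2⟩ := restrict_label_eq_some.1 h
    exact ⟨hT.label_mem h1, ⟨a, ⟨v, ReflTransGen.refl, h1⟩, h2⟩⟩
  · intro u v a hu hv
    exact hT.label_inj (restrict_label_eq_some.1 hu).1 (restrict_label_eq_some.1 hv).1
  · intro v hv hleaf
    obtain ⟨x, ⟨w, hw1, hw2⟩, hx2⟩ := hv.2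
    rcases Relation.ReflTransGen.cases_head hw1 with heq | ⟨c, hc1, hc2⟩
    · subst heq
      exact ⟨x, restrict_label_eq_some.2 ⟨hw2, hx2⟩⟩
    · exfalso
      refine hleaf c ⟨hc1, hv.2, ⟨x, cluster_mono hc2 ⟨w, ReflTransGen.refl, hw2⟩, hx2⟩⟩

lemma wte_restrict_id {T : PreTree α V} {X : Set α} :
    PreTree.IsWTE (T.restrict X) T id := by
  refine ⟨fun v hv => hv.1, fun u _ v _ h => h, ?_, ?_⟩
  · intro v a h
    exact (restrict_label_eq_some.1 h).1
  · intro u hu v hv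
    exact ⟨fun h => restrict_path_le h, fun h => path_restrict h hv.2⟩

lemma wte_comp {T₁ : PreTree α V} {T₂ : PreTree α W} {T₃ : PreTree α U}
    {f : V → W} {g : W → U} (hf : PreTree.IsWTE T₁ T₂ f) (hg : PreTree.IsWTE T₂ T₃ g) :
    PreTree.IsWTE T₁ T₃ (g ∘ f) := by
  obtain ⟨hf1, hf2, hf3, hf4⟩ := hf
  obtain ⟨hg1, hg2, hg3, hg4⟩ := hg
  refine ⟨fun v hv => hg1 _ (hf1 v hv), ?_, fun v a h => hg3 _ _ (hf3 v a h), ?_⟩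
  · intro u hu v hv h
    exact hf2 u hu v hv (hg2 _ (hf1 u hu) _ (hf1 v hv) h)
  · intro u hu v hv
    exact (hf4 u hu v hv).trans (hg4 _ (hf1 u hu) _ (hf1 v hv))

end Stmt13Aux

section Stmt13Star
open PreTree Relation Classical

variable {α V W U : Type}

/-- Private nodes of `T₁` relative to `X`. -/
def priv (T : PreTree α V) (X : Set α) (v : V) : Prop :=
  v ∈ T.nodes ∧ v ∉ (T.restrict X).nodes

open Classical in
/-- The glued tree: a new root, three-slot chains for every node of `T`, and the private
parts of `T₁` and `T₂` hanging off the images of their attachment points. -/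
noncomputable def starT (T₁ : PreTree α V) (T₂ : PreTree α W) (T : PreTree α U)
    (X : Set α) (f : V → U) (g : W → U) :
    PreTree α (Option ((V ⊕ W) ⊕ (U × ℕ))) where
  nodes := {x | match x with
    | none => True
    | some (Sum.inl (Sum.inl p)) => priv T₁ X p
    | some (Sum.inl (Sum.inr q)) => priv T₂ X q
    | some (Sum.inr (u, i)) => u ∈ T.nodes ∧ i ≤ 2}
  arc x y := match x, y with
    | none, some (Sum.inr (u, i)) => i = 0 ∧ u ∈ T.nodes ∧ ∀ z ∈ T.nodes, T.path u z
    | none, some (Sum.inl (Sum.inl p)) => priv T₁ X p ∧ ∀ z ∈ T₁.nodes, T₁.path p z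
    | none, some (Sum.inl (Sum.inr q)) => priv T₂ X q ∧ ∀ z ∈ T₂.nodes, T₂.path q z
    | some (Sum.inr (u, i)), some (Sum.inr (u', j)) =>
        (u' = u ∧ u ∈ T.nodes ∧ ((i = 0 ∧ j = 1) ∨ (i = 1 ∧ j = 2))) ∨
        (i = 2 ∧ j = 0 ∧ T.arc u u')
    | some (Sum.inr (u, i)), some (Sum.inl (Sum.inl p)) =>
        i = 2 ∧ priv T₁ X p ∧ ∃ v ∈ (T₁.restrict X).nodes, f v = u ∧ T₁.arc v p
    | some (Sum.inr (u, i)), some (Sum.inl (Sum.inr q)) =>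
        i = 2 ∧ priv T₂ X q ∧ ∃ w ∈ (T₂.restrict X).nodes, g w = u ∧ T₂.arc w q
    | some (Sum.inl (Sum.inl p)), some (Sum.inl (Sum.inl p')) =>
        priv T₁ X p ∧ priv T₁ X p' ∧ T₁.arc p p'
    | some (Sum.inl (Sum.inr q)), some (Sum.inl (Sum.inr q')) =>
        priv T₂ X q ∧ priv T₂ X q' ∧ T₂.arc q q'
    | _, _ => False
  label x := match x with
    | none => none
    | some (Sum.inl (Sum.inl p)) => if priv T₁ X p then T₁.label p else none
    | some (Sum.inl (Sum.inr q)) => if priv T₂ X q then T₂.label q else none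
    | some (Sum.inr (u, 0)) =>
        if h : ∃ v ∈ (T₁.restrict X).nodes, f v = u ∧ ∃ a, T₁.label v = some a ∧ a ∉ X
        then T₁.label h.choose else none
    | some (Sum.inr (u, 1)) =>
        if h : ∃ w ∈ (T₂.restrict X).nodes, g w = u ∧ ∃ a, T₂.label w = some a ∧ a ∉ X
        then T₂.label h.choose else none
    | some (Sum.inr (u, 2)) => T.label u
    | some (Sum.inr (_, _+3)) => none

variable {T₁ : PreTree α V} {T₂ : PreTree α W} {T : PreTree α U} {X : Set α}
  {f : V → U} {g : W → U}

lemma priv_of_path {p q : V} (hp : priv T₁ X p) (hq : q ∈ T₁.nodes)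
    (h : T₁.path p q) : priv T₁ X q := by
  refine ⟨hq, fun hmem => hp.2 ⟨hp.1, ?_⟩⟩
  obtain ⟨x, hx1, hx2⟩ := hmem.2
  exact ⟨x, cluster_mono h hx1, hx2⟩

/-- Lift a path between private nodes of `T₁`. -/
lemma star_privL_path {p q : V} (hp : priv T₁ X p) (h : T₁.path p q) (h₁ : T₁.IsATree) :
    (starT T₁ T₂ T X f g).path (some (Sum.inl (Sum.inl p))) (some (Sum.inl (Sum.inl q))) := by
  induction h using Relation.ReflTransGen.head_induction_on with
  | refl => exact ReflTransGen.refl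
  | head harc hpath ih =>
    rename_i a c
    have hpa : priv T₁ X a := hp
    have hpc : priv T₁ X c := priv_of_path hpa (h₁.arc_mem_right harc)
      (ReflTransGen.single harc)
    exact ReflTransGen.head (show (starT T₁ T₂ T X f g).arc
      (some (Sum.inl (Sum.inl a))) (some (Sum.inl (Sum.inl c))) from ⟨hpa, hpc, harc⟩)
      (ih hpc)

lemma star_privR_path {p q : W} (hp : priv T₂ X p) (h : T₂.path p q) (h₂ : T₂.IsATree) :
    (starT T₁ T₂ T X f g).path (some (Sum.inl (Sum.inr p))) (some (Sum.inl (Sum.inr q))) := by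
  induction h using Relation.ReflTransGen.head_induction_on with
  | refl => exact ReflTransGen.refl
  | head harc hpath ih =>
    rename_i a c
    have hpa : priv T₂ X a := hp
    have hpc : priv T₂ X c := priv_of_path hpa (h₂.arc_mem_right harc)
      (ReflTransGen.single harc)
    exact ReflTransGen.head (show (starT T₁ T₂ T X f g).arc
      (some (Sum.inl (Sum.inr a))) (some (Sum.inl (Sum.inr c))) from ⟨hpa, hpc, harc⟩)
      (ih hpc)

/-- Lift a `T`-path to a path between the bottom slots. -/
lemma star_base_path {u u' : U} (h : T.path u u') (hT : T.IsATree) :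
    (starT T₁ T₂ T X f g).path (some (Sum.inr (u, 2))) (some (Sum.inr (u', 2))) := by
  induction h using Relation.ReflTransGen.head_induction_on with
  | refl => exact ReflTransGen.refl
  | head harc hpath ih =>
    rename_i a c
    have hc : c ∈ T.nodes := hT.arc_mem_right harc
    refine ReflTransGen.head (show (starT T₁ T₂ T X f g).arc
      (some (Sum.inr (a, 2))) (some (Sum.inr (c, 0))) from Or.inr ⟨rfl, rfl, harc⟩) ?_
    refine ReflTransGen.head (show (starT T₁ T₂ T X f g).arc
      (some (Sum.inr (c, 0))) (some (Sum.inr (c, 1))) from Or.inl ⟨rfl, hc, Or.inl ⟨rfl, rfl⟩⟩) ?_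
    exact ReflTransGen.head (show (starT T₁ T₂ T X f g).arc
      (some (Sum.inr (c, 1))) (some (Sum.inr (c, 2))) from Or.inl ⟨rfl, hc, Or.inr ⟨rfl, rfl⟩⟩) ih

/-- Chain path inside one gadget. -/
lemma star_chain_path {u : U} (hu : u ∈ T.nodes) {i j : ℕ} (hij : i ≤ j) (hj : j ≤ 2) :
    (starT T₁ T₂ T X f g).path (some (Sum.inr (u, i))) (some (Sum.inr (u, j))) := by
  have a01 : (starT T₁ T₂ T X f g).arc (some (Sum.inr (u, 0))) (some (Sum.inr (u, 1))) :=
    Or.inl ⟨rfl, hu, Or.inl ⟨rfl, rfl⟩⟩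
  have a12 : (starT T₁ T₂ T X f g).arc (some (Sum.inr (u, 1))) (some (Sum.inr (u, 2))) :=
    Or.inl ⟨rfl, hu, Or.inr ⟨rfl, rfl⟩⟩
  interval_cases j
  · interval_cases i
    · exact ReflTransGen.refl
  · interval_cases i
    · exact ReflTransGen.single a01
    · exact ReflTransGen.refl
  · interval_cases i
    · exact ReflTransGen.head a01 (ReflTransGen.single a12)
    · exact ReflTransGen.single a12
    · exact ReflTransGen.refl

/-- Lift a `T`-path to a path between arbitrary slots, provided distinct gadgets or
increasing index. -/
lemma star_slot_path {u u' : U} (h : T.path u u') (hT : T.IsATree) {i i' : ℕ}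
    (hi : i ≤ 2) (hi' : i' ≤ 2) (hne : u = u' → i ≤ i') (hu : u ∈ T.nodes) :
    (starT T₁ T₂ T X f g).path (some (Sum.inr (u, i))) (some (Sum.inr (u', i'))) := by
  rcases Relation.ReflTransGen.cases_tail h with heq | ⟨c, hc1, hc2⟩
  · subst heq
    exact star_chain_path hu (hne rfl) hi'
  · refine ((star_chain_path hu hi (le_refl 2)).trans
      ((star_base_path hc1 hT).trans ?_))
    refine ReflTransGen.head (show (starT T₁ T₂ T X f g).arc
      (some (Sum.inr (c, 2))) (some (Sum.inr (u', 0))) from Or.inr ⟨rfl, rfl, hc2⟩) ?_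
    exact star_chain_path (hT.arc_mem_right hc2) (Nat.zero_le _) hi'

end Stmt13Star

section Stmt13Struct
open PreTree Relation Classical

variable {α V W U : Type}
variable {T₁ : PreTree α V} {T₂ : PreTree α W} {T : PreTree α U} {X : Set α}
  {f : V → U} {g : W → U}

/-- Structure of paths in the glued tree. -/
def starGood (T₁ : PreTree α V) (T₂ : PreTree α W) (T : PreTree α U) (X : Set α)
    (f : V → U) (g : W → U) (x y : Option ((V ⊕ W) ⊕ (U × ℕ))) : Prop :=
  match x with
  | none => True
  | some (Sum.inl (Sum.inl p)) => ∃ q, y = some (Sum.inl (Sum.inl q)) ∧ T₁.path p q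
  | some (Sum.inl (Sum.inr p)) => ∃ q, y = some (Sum.inl (Sum.inr q)) ∧ T₂.path p q
  | some (Sum.inr (u, i)) =>
    match y with
    | none => False
    | some (Sum.inr (u', i')) => (u' = u ∧ i ≤ i') ∨ T.pathNT u u'
    | some (Sum.inl (Sum.inl q)) => ∃ s p, s ∈ (T₁.restrict X).nodes ∧ priv T₁ X p ∧
        T₁.arc s p ∧ T₁.path p q ∧ T.path u (f s)
    | some (Sum.inl (Sum.inr q)) => ∃ s p, s ∈ (T₂.restrict X).nodes ∧ priv T₂ X p ∧
        T₂.arc s p ∧ T₂.path p q ∧ T.path u (g s)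

lemma star_path_struct {x y : Option ((V ⊕ W) ⊕ (U × ℕ))}
    (h : (starT T₁ T₂ T X f g).path x y) : starGood T₁ T₂ T X f g x y := by
  induction h using Relation.ReflTransGen.head_induction_on with
  | refl =>
    rcases y with _ | ((p | p) | ⟨u, i⟩)
    · trivial
    · exact ⟨p, rfl, ReflTransGen.refl⟩
    · exact ⟨p, rfl, ReflTransGen.refl⟩
    · exact Or.inl ⟨rfl, le_refl i⟩
  | head harc hpath ih =>
    rename_i a c
    rcases a with _ | ((p | p) | ⟨u, i⟩)
    · trivial
    · -- from a left-private node: arcs go only to left-private nodes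
      rcases c with _ | ((p' | p') | ⟨u', i'⟩) <;>
        simp only [starT] at harc <;> try exact absurd harc not_false
      obtain ⟨q, rfl, hq⟩ := ih
      exact ⟨q, rfl, ReflTransGen.head harc.2.2 hq⟩
    · rcases c with _ | ((p' | p') | ⟨u', i'⟩) <;>
        simp only [starT] at harc <;> try exact absurd harc not_false
      obtain ⟨q, rfl, hq⟩ := ih
      exact ⟨q, rfl, ReflTransGen.head harc.2.2 hq⟩
    · -- from a slot
      rcases c with _ | ((p' | p') | ⟨u', i'⟩) <;>
        simp only [starT] at harc <;> try exact absurd harc not_false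
      · -- attach to left-private p'
        obtain ⟨hi, hp', v, hv, hfv, harc'⟩ := harc
        obtain ⟨q, rfl, hq⟩ := ih
        exact ⟨v, p', hv, hp', harc', hq, hfv ▸ Relation.ReflTransGen.refl⟩
      · obtain ⟨hi, hp', w, hw, hgw, harc'⟩ := harc
        obtain ⟨q, rfl, hq⟩ := ih
        exact ⟨w, p', hw, hp', harc', hq, hgw ▸ Relation.ReflTransGen.refl⟩
      · -- slot to slot
        rcases harc with ⟨rfl, hu, hij⟩ | ⟨hi, hj, harc'⟩
        · -- chain arc
          rcases y with _ | ((q | q) | ⟨u'', i''⟩)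
          · exact ih
          · obtain ⟨s, p, hs, hp, ha, hpq, hpath'⟩ := ih
            exact ⟨s, p, hs, hp, ha, hpq, hpath'⟩
          · obtain ⟨s, p, hs, hp, ha, hpq, hpath'⟩ := ih
            exact ⟨s, p, hs, hp, ha, hpq, hpath'⟩
          · rcases ih with ⟨rfl, hle⟩ | hnt
            · rcases hij with ⟨rfl, rfl⟩ | ⟨rfl, rfl⟩
              · exact Or.inl ⟨rfl, le_trans (by norm_num) hle⟩
              · exact Or.inl ⟨rfl, le_trans (by norm_num) hle⟩
            · exact Or.inr hnt
        · -- T-arc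
          rcases y with _ | ((q | q) | ⟨u'', i''⟩)
          · exact ih
          · obtain ⟨s, p, hs, hp, ha, hpq, hpath'⟩ := ih
            exact ⟨s, p, hs, hp, ha, hpq, ReflTransGen.head harc' hpath'⟩
          · obtain ⟨s, p, hs, hp, ha, hpq, hpath'⟩ := ih
            exact ⟨s, p, hs, hp, ha, hpq, ReflTransGen.head harc' hpath'⟩
          · rcases ih with ⟨rfl, hle⟩ | hnt
            · exact Or.inr (Relation.TransGen.single harc')
            · exact Or.inr (Relation.TransGen.head harc' hnt)

lemma star_no_path_to_root {x : Option ((V ⊕ W) ⊕ (U × ℕ))}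
    (h : (starT T₁ T₂ T X f g).path x none) : x = none := by
  rcases Relation.ReflTransGen.cases_tail h with heq | ⟨c, hc1, hc2⟩
  · exact heq.symm
  · exfalso
    rcases c with _ | ((p | p) | ⟨u, i⟩) <;> simp only [starT] at hc2

end Stmt13Struct

section Stmt13Labels
open PreTree Relation Classical

variable {α V W U : Type}
variable {T₁ : PreTree α V} {T₂ : PreTree α W} {T : PreTree α U} {X : Set α}
  {f : V → U} {g : W → U}

lemma priv_label_not_memX {p : V} {a : α} (hp : priv T₁ X p)
    (hl : T₁.label p = some a) : a ∉ X :=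
  fun haX => hp.2 ⟨hp.1, ⟨a, ⟨p, Relation.ReflTransGen.refl, hl⟩, haX⟩⟩

lemma starT_label_privL {p : V} {a : α} :
    (starT T₁ T₂ T X f g).label (some (Sum.inl (Sum.inl p))) = some a ↔
      priv T₁ X p ∧ T₁.label p = some a := by
  simp only [starT]
  split_ifs with h
  · exact ⟨fun hl => ⟨h, hl⟩, fun hl => hl.2⟩
  · exact ⟨fun hl => absurd hl (by simp), fun hl => absurd hl.1 h⟩

lemma starT_label_privR {q : W} {a : α} :
    (starT T₁ T₂ T X f g).label (some (Sum.inl (Sum.inr q))) = some a ↔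
      priv T₂ X q ∧ T₂.label q = some a := by
  simp only [starT]
  split_ifs with h
  · exact ⟨fun hl => ⟨h, hl⟩, fun hl => hl.2⟩
  · exact ⟨fun hl => absurd hl (by simp), fun hl => absurd hl.1 h⟩

lemma starT_label_slot0 {u : U} {a : α}
    (h : (starT T₁ T₂ T X f g).label (some (Sum.inr (u, 0))) = some a) :
    ∃ v ∈ (T₁.restrict X).nodes, f v = u ∧ T₁.label v = some a ∧ a ∉ X := by
  simp only [starT] at h
  split_ifs at h with hc
  · obtain ⟨hv, hfv, a₀, hla, hnX⟩ := hc.choose_spec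
    rw [h] at hla
    cases hla
    exact ⟨hc.choose, hv, hfv, h, hnX⟩

lemma starT_label_slot1 {u : U} {a : α}
    (h : (starT T₁ T₂ T X f g).label (some (Sum.inr (u, 1))) = some a) :
    ∃ w ∈ (T₂.restrict X).nodes, g w = u ∧ T₂.label w = some a ∧ a ∉ X := by
  simp only [starT] at h
  split_ifs at h with hc
  · obtain ⟨hv, hfv, a₀, hla, hnX⟩ := hc.choose_spec
    rw [h] at hla
    cases hla
    exact ⟨hc.choose, hv, hfv, h, hnX⟩

lemma starT_label_slot2 {u : U} :
    (starT T₁ T₂ T X f g).label (some (Sum.inr (u, 2))) = T.label u := rfl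

lemma starT_label_slot0_eq (hf : PreTree.IsWTE (T₁.restrict X) T f)
    {v : V} {a : α} (hv : v ∈ (T₁.restrict X).nodes) (hl : T₁.label v = some a)
    (hnX : a ∉ X) :
    (starT T₁ T₂ T X f g).label (some (Sum.inr (f v, 0))) = some a := by
  have hcond : ∃ v' ∈ (T₁.restrict X).nodes, f v' = f v ∧
      ∃ a, T₁.label v' = some a ∧ a ∉ X := ⟨v, hv, rfl, a, hl, hnX⟩
  simp only [starT]
  rw [dif_pos hcond]
  obtain ⟨hv', hfv', _⟩ := hcond.choose_spec
  rw [hf.2.1 _ hv' _ hv hfv']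
  exact hl

lemma starT_label_slot1_eq (hg : PreTree.IsWTE (T₂.restrict X) T g)
    {w : W} {a : α} (hw : w ∈ (T₂.restrict X).nodes) (hl : T₂.label w = some a)
    (hnX : a ∉ X) :
    (starT T₁ T₂ T X f g).label (some (Sum.inr (g w, 1))) = some a := by
  have hcond : ∃ w' ∈ (T₂.restrict X).nodes, g w' = g w ∧
      ∃ a, T₂.label w' = some a ∧ a ∉ X := ⟨w, hw, rfl, a, hl, hnX⟩
  simp only [starT]
  rw [dif_pos hcond]
  obtain ⟨hw', hgw', _⟩ := hcond.choose_spec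
  rw [hg.2.1 _ hw' _ hw hgw']
  exact hl

lemma mem_labelSet_of_label {S : PreTree α V} {v : V} {a : α}
    (h : S.label v = some a) : a ∈ S.labelSet := ⟨v, h⟩

end Stmt13Labels

section Stmt13Tree
open PreTree Relation Classical

variable {α V W U : Type}
variable {T₁ : PreTree α V} {T₂ : PreTree α W} {T : PreTree α U} {X : Set α}
  {f : V → U} {g : W → U}

lemma shared_to_priv_decomp (h₁ : T₁.IsATree) {v p : V}
    (hp : priv T₁ X p) (h : T₁.path v p) (hv : v ∈ (T₁.restrict X).nodes) :
    ∃ s q, s ∈ (T₁.restrict X).nodes ∧ priv T₁ X q ∧ T₁.path v s ∧ T₁.arc s q ∧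
      T₁.path q p := by
  induction h using Relation.ReflTransGen.head_induction_on with
  | refl => exact absurd hv hp.2
  | head harc hpath ih =>
    rename_i a c
    by_cases hc : c ∈ (T₁.restrict X).nodes
    · obtain ⟨s, q, hs, hq, h1, h2, h3⟩ := ih hc
      exact ⟨s, q, hs, hq, ReflTransGen.head harc h1, h2, h3⟩
    · exact ⟨a, c, hv, ⟨h₁.arc_mem_right harc, hc⟩, ReflTransGen.refl, harc, hpath⟩

lemma shared_to_priv_decompR (h₂ : T₂.IsATree) {v p : W}
    (hp : priv T₂ X p) (h : T₂.path v p) (hv : v ∈ (T₂.restrict X).nodes) :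
    ∃ s q, s ∈ (T₂.restrict X).nodes ∧ priv T₂ X q ∧ T₂.path v s ∧ T₂.arc s q ∧
      T₂.path q p := by
  induction h using Relation.ReflTransGen.head_induction_on with
  | refl => exact absurd hv hp.2
  | head harc hpath ih =>
    rename_i a c
    by_cases hc : c ∈ (T₂.restrict X).nodes
    · obtain ⟨s, q, hs, hq, h1, h2, h3⟩ := ih hc
      exact ⟨s, q, hs, hq, ReflTransGen.head harc h1, h2, h3⟩
    · exact ⟨a, c, hv, ⟨h₂.arc_mem_right harc, hc⟩, ReflTransGen.refl, harc, hpath⟩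

theorem isATree_starT (h₁ : T₁.IsATree) (h₂ : T₂.IsATree) (hT : T.IsATree)
    (hf : PreTree.IsWTE (T₁.restrict X) T f) (hg : PreTree.IsWTE (T₂.restrict X) T g)
    (hTX : T.labelSet ⊆ X) (hX : T₁.labelSet ∩ T₂.labelSet ⊆ X)
    (hne : T₁.nodes.Nonempty ∨ T₂.nodes.Nonempty) :
    (starT T₁ T₂ T X f g).IsATree := by
  have notBoth : ∀ {a : α}, a ∉ X → a ∈ T₁.labelSet → a ∉ T₂.labelSet :=
    fun hnX ha1 ha2 => hnX (hX ⟨ha1, ha2⟩)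
  constructor
  · -- finiteness
    have hsub : (starT T₁ T₂ T X f g).nodes ⊆ insert none
        (((fun p => some (Sum.inl (Sum.inl p))) '' T₁.nodes) ∪
         ((fun q => some (Sum.inl (Sum.inr q))) '' T₂.nodes) ∪
         ((fun p => some (Sum.inr p)) '' (T.nodes ×ˢ Set.Iic 2))) := by
      rintro (_ | ((p | q) | ⟨u, i⟩)) hx
      · exact Set.mem_insert _ _
      · exact Set.mem_insert_of_mem _ (Or.inl (Or.inl ⟨p, hx.1, rfl⟩))
      · exact Set.mem_insert_of_mem _ (Or.inl (Or.inr ⟨q, hx.1, rfl⟩))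
      · exact Set.mem_insert_of_mem _ (Or.inr ⟨(u, i), ⟨hx.1, hx.2⟩, rfl⟩)
    exact Set.Finite.subset ((((h₁.finite_nodes.image _).union
      (h₂.finite_nodes.image _)).union
      ((hT.finite_nodes.prod (Set.finite_Iic 2)).image _)).insert none) hsub
  · -- arc_mem_left
    rintro (_ | ((p | q) | ⟨u, i⟩)) (_ | ((p' | q') | ⟨u', j⟩)) h <;>
      try exact h.elim
    · exact trivial
    · exact trivial
    · exact trivial
    · exact h.1
    · exact h.1
    · obtain ⟨rfl, hp, v, hv, rfl, harc⟩ := h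
      exact ⟨hf.1 v hv, by omega⟩
    · obtain ⟨rfl, hp, w, hw, rfl, harc⟩ := h
      exact ⟨hg.1 w hw, by omega⟩
    · rcases h with ⟨rfl, hu, ⟨rfl, rfl⟩ | ⟨rfl, rfl⟩⟩ | ⟨rfl, rfl, harc⟩
      · exact ⟨hu, by omega⟩
      · exact ⟨hu, by omega⟩
      · exact ⟨hT.arc_mem_left harc, by omega⟩
  · -- arc_mem_right
    rintro (_ | ((p | q) | ⟨u, i⟩)) (_ | ((p' | q') | ⟨u', j⟩)) h <;>
      try exact h.elim
    · exact h.1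
    · exact h.1
    · obtain ⟨rfl, hu', -⟩ := h
      exact ⟨hu', by omega⟩
    · exact h.2.1
    · exact h.2.1
    · exact h.2.1
    · exact h.2.1
    · rcases h with ⟨rfl, hu, ⟨rfl, rfl⟩ | ⟨rfl, rfl⟩⟩ | ⟨rfl, rfl, harc⟩
      · exact ⟨hu, by omega⟩
      · exact ⟨hu, by omega⟩
      · exact ⟨hT.arc_mem_right harc, by omega⟩
  · -- parent_unique
    rintro (_ | ((p | q) | ⟨u, i⟩)) (_ | ((p' | q') | ⟨u', j⟩))
        (_ | ((p'' | q'') | ⟨u'', k⟩)) hac hbc <;>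
      first
        | exact hac.elim
        | exact hbc.elim
        | skip
    -- x = none, y = none, c = aL / aR / slot
    · rfl
    · rfl
    · rfl
    -- x = none, y = aL, c = aL
    · exact absurd (hac.2 p' (h₁.arc_mem_left hbc.2.2)) (h₁.acyclic hbc.2.2)
    -- x = none, y = aR, c = aR
    · exact absurd (hac.2 q' (h₂.arc_mem_left hbc.2.2)) (h₂.acyclic hbc.2.2)
    -- x = none, y = slot, c = aL
    · obtain ⟨_, _, v, hv, rfl, harc⟩ := hbc
      exact absurd (hac.2 v hv.1) (h₁.acyclic harc)
    -- x = none, y = slot, c = aR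
    · obtain ⟨_, _, w, hw, rfl, harc⟩ := hbc
      exact absurd (hac.2 w hw.1) (h₂.acyclic harc)
    -- x = none, y = slot, c = slot
    · rcases hbc with ⟨rfl, hu, hjk⟩ | ⟨hi, rfl, harc⟩
      · obtain ⟨h0, -, -⟩ := hac
        omega
      · exact absurd (hac.2.2 u' (hT.arc_mem_left harc)) (hT.acyclic harc)
    -- x = aL, y = none, c = aL
    · exact absurd (hbc.2 p (h₁.arc_mem_left hac.2.2)) (h₁.acyclic hac.2.2)
    -- x = aL, y = aL, c = aL
    · rw [h₁.parent_unique hac.2.2 hbc.2.2]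
    -- x = aL, y = slot, c = aL
    · obtain ⟨_, _, v, hv, rfl, harc⟩ := hbc
      exact absurd hv (h₁.parent_unique hac.2.2 harc ▸ hac.1).2
    -- x = aR, y = none, c = aR
    · exact absurd (hbc.2 q (h₂.arc_mem_left hac.2.2)) (h₂.acyclic hac.2.2)
    -- x = aR, y = aR, c = aR
    · rw [h₂.parent_unique hac.2.2 hbc.2.2]
    -- x = aR, y = slot, c = aR
    · obtain ⟨_, _, w, hw, rfl, harc⟩ := hbc
      exact absurd hw (h₂.parent_unique hac.2.2 harc ▸ hac.1).2
    -- x = slot, y = none, c = aL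
    · obtain ⟨_, _, v, hv, rfl, harc⟩ := hac
      exact absurd (hbc.2 v hv.1) (h₁.acyclic harc)
    -- x = slot, y = none, c = aR
    · obtain ⟨_, _, w, hw, rfl, harc⟩ := hac
      exact absurd (hbc.2 w hw.1) (h₂.acyclic harc)
    -- x = slot, y = none, c = slot
    · rcases hac with ⟨rfl, hu, hik⟩ | ⟨hi, rfl, harc⟩
      · obtain ⟨h0, -, -⟩ := hbc
        omega
      · exact absurd (hbc.2.2 u (hT.arc_mem_left harc)) (hT.acyclic harc)
    -- x = slot, y = aL, c = aL
    · obtain ⟨_, _, v, hv, rfl, harc⟩ := hac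
      exact absurd hv (h₁.parent_unique hbc.2.2 harc ▸ hbc.1).2
    -- x = slot, y = aR, c = aR
    · obtain ⟨_, _, w, hw, rfl, harc⟩ := hac
      exact absurd hw (h₂.parent_unique hbc.2.2 harc ▸ hbc.1).2
    -- x = slot, y = slot, c = aL
    · obtain ⟨rfl, _, v, hv, rfl, harc⟩ := hac
      obtain ⟨rfl, _, v', hv', rfl, harc'⟩ := hbc
      rw [h₁.parent_unique harc harc']
    -- x = slot, y = slot, c = aR
    · obtain ⟨rfl, _, w, hw, rfl, harc⟩ := hac
      obtain ⟨rfl, _, w', hw', rfl, harc'⟩ := hbc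
      rw [h₂.parent_unique harc harc']
    -- x = slot, y = slot, c = slot
    · rcases hac with ⟨ha1, hu, ⟨ha2, ha3⟩ | ⟨ha2, ha3⟩⟩ | ⟨ha2, ha3, harc⟩ <;>
        rcases hbc with ⟨hb1, hu', ⟨hb2, hb3⟩ | ⟨hb2, hb3⟩⟩ | ⟨hb2, hb3, harc'⟩
      · rw [show u = u' from ha1.symm.trans hb1, ha2, hb2]
      · omega
      · omega
      · omega
      · rw [show u = u' from ha1.symm.trans hb1, ha2, hb2]
      · omega
      · omega
      · omega
      · rw [hT.parent_unique harc harc', ha2, hb2]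
  · -- acyclic
    rintro (_ | ((p | q) | ⟨u, i⟩)) (_ | ((p' | q') | ⟨u', j⟩)) h hpath <;>
      try exact h.elim
    · exact (Option.some_ne_none _ (star_no_path_to_root hpath)).elim
    · exact (Option.some_ne_none _ (star_no_path_to_root hpath)).elim
    · exact (Option.some_ne_none _ (star_no_path_to_root hpath)).elim
    · obtain ⟨q0, heq, hq⟩ := star_path_struct hpath
      simp only [Option.some.injEq, Sum.inl.injEq] at heq
      subst heq
      exact h₁.acyclic h.2.2 hq
    · obtain ⟨q0, heq, hq⟩ := star_path_struct hpath
      simp only [Option.some.injEq, Sum.inl.injEq, Sum.inr.injEq] at heq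
      subst heq
      exact h₂.acyclic h.2.2 hq
    · obtain ⟨q, heq, -⟩ := star_path_struct hpath
      simp at heq
    · obtain ⟨q, heq, -⟩ := star_path_struct hpath
      simp at heq
    · rcases h with ⟨rfl, hu, ⟨rfl, rfl⟩ | ⟨rfl, rfl⟩⟩ | ⟨rfl, rfl, harc⟩
      · rcases star_path_struct hpath with ⟨-, hle⟩ | hnt
        · omega
        · exact no_pathNT_self hT hnt
      · rcases star_path_struct hpath with ⟨-, hle⟩ | hnt
        · omega
        · exact no_pathNT_self hT hnt
      · rcases star_path_struct hpath with ⟨rfl, hle⟩ | hnt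
        · exact hT.acyclic harc ReflTransGen.refl
        · exact hT.acyclic harc hnt.to_reflTransGen
  · -- rooted
    intro hnodes
    refine ⟨none, trivial, ?_⟩
    rintro (_ | ((p | q) | ⟨u, i⟩)) hy
    · exact ReflTransGen.refl
    · -- reach a private left node
      obtain ⟨r₁, hr₁, hall₁⟩ := h₁.rooted ⟨p, hy.1⟩
      by_cases hsh : r₁ ∈ (T₁.restrict X).nodes
      · obtain ⟨s, q0, hs, hq0, hps, harcsq, hqp⟩ :=
          shared_to_priv_decomp h₁ hy (hall₁ p hy.1) hsh
        obtain ⟨r, hr, hallr⟩ := hT.rooted ⟨f s, hf.1 s hs⟩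
        refine ReflTransGen.head (show (starT T₁ T₂ T X f g).arc none
          (some (Sum.inr (r, 0))) from ⟨rfl, hr, hallr⟩) ?_
        refine ReflTransGen.trans (star_slot_path (i := 0) (i' := 2)
          (hallr (f s) (hf.1 s hs)) hT (Nat.zero_le _) (le_refl 2)
          (fun _ => Nat.zero_le _) hr) ?_
        refine ReflTransGen.head (show (starT T₁ T₂ T X f g).arc
          (some (Sum.inr (f s, 2))) (some (Sum.inl (Sum.inl q0))) from
          ⟨rfl, hq0, s, hs, rfl, harcsq⟩) ?_
        exact star_privL_path hq0 hqp h₁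
      · exact ReflTransGen.head (show (starT T₁ T₂ T X f g).arc none
          (some (Sum.inl (Sum.inl r₁))) from ⟨⟨hr₁, hsh⟩, hall₁⟩)
          (star_privL_path ⟨hr₁, hsh⟩ (hall₁ p hy.1) h₁)
    · obtain ⟨r₂, hr₂, hall₂⟩ := h₂.rooted ⟨q, hy.1⟩
      by_cases hsh : r₂ ∈ (T₂.restrict X).nodes
      · obtain ⟨s, q0, hs, hq0, hps, harcsq, hqp⟩ :=
          shared_to_priv_decompR h₂ hy (hall₂ q hy.1) hsh
        obtain ⟨r, hr, hallr⟩ := hT.rooted ⟨g s, hg.1 s hs⟩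
        refine ReflTransGen.head (show (starT T₁ T₂ T X f g).arc none
          (some (Sum.inr (r, 0))) from ⟨rfl, hr, hallr⟩) ?_
        refine ReflTransGen.trans (star_slot_path (i := 0) (i' := 2)
          (hallr (g s) (hg.1 s hs)) hT (Nat.zero_le _) (le_refl 2)
          (fun _ => Nat.zero_le _) hr) ?_
        refine ReflTransGen.head (show (starT T₁ T₂ T X f g).arc
          (some (Sum.inr (g s, 2))) (some (Sum.inl (Sum.inr q0))) from
          ⟨rfl, hq0, s, hs, rfl, harcsq⟩) ?_
        exact star_privR_path hq0 hqp h₂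
      · exact ReflTransGen.head (show (starT T₁ T₂ T X f g).arc none
          (some (Sum.inl (Sum.inr r₂))) from ⟨⟨hr₂, hsh⟩, hall₂⟩)
          (star_privR_path ⟨hr₂, hsh⟩ (hall₂ q hy.1) h₂)
    · obtain ⟨r, hr, hallr⟩ := hT.rooted ⟨u, hy.1⟩
      exact ReflTransGen.head (show (starT T₁ T₂ T X f g).arc none
        (some (Sum.inr (r, 0))) from ⟨rfl, hr, hallr⟩)
        (star_slot_path (i := 0) (hallr u hy.1) hT (Nat.zero_le _) hy.2
          (fun _ => Nat.zero_le _) hr)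
  · -- label_mem
    rintro (_ | ((p | q) | ⟨u, i⟩)) a hl
    · exact (Option.some_ne_none _ hl.symm).elim
    · exact (starT_label_privL.1 hl).1
    · exact (starT_label_privR.1 hl).1
    · rcases i with _ | _ | _ | i
      · obtain ⟨v, hv, hfv, -, -⟩ := starT_label_slot0 hl
        exact ⟨hfv ▸ hf.1 v hv, by omega⟩
      · obtain ⟨w, hw, hgw, -, -⟩ := starT_label_slot1 hl
        exact ⟨hgw ▸ hg.1 w hw, by omega⟩
      · exact ⟨hT.label_mem hl, by omega⟩
      · exact (Option.some_ne_none _ hl.symm).elim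
  · -- label_inj
    rintro (_ | ((p | q) | ⟨u, _ | _ | _ | i⟩))
        (_ | ((p' | q') | ⟨u', _ | _ | _ | j⟩)) a hx hy <;>
      first
        | exact (Option.some_ne_none _ hx.symm).elim
        | exact (Option.some_ne_none _ hy.symm).elim
        | skip
    -- aL aL
    · obtain ⟨hp, hlp⟩ := starT_label_privL.1 hx
      obtain ⟨hp', hlp'⟩ := starT_label_privL.1 hy
      rw [h₁.label_inj hlp hlp']
    -- aL aR
    · obtain ⟨hp, hlp⟩ := starT_label_privL.1 hx
      obtain ⟨hq', hlq'⟩ := starT_label_privR.1 hy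
      exact absurd (mem_labelSet_of_label hlq') (notBoth (priv_label_not_memX hp hlp) (mem_labelSet_of_label hlp))
    -- aL slot0
    · obtain ⟨hp, hlp⟩ := starT_label_privL.1 hx
      obtain ⟨v, hv, hfv, hlv, -⟩ := starT_label_slot0 hy
      exact absurd hv ((h₁.label_inj hlp hlv ▸ hp).2)
    -- aL slot1
    · obtain ⟨hp, hlp⟩ := starT_label_privL.1 hx
      obtain ⟨w, hw, hgw, hlw, -⟩ := starT_label_slot1 hy
      exact absurd (mem_labelSet_of_label hlw) (notBoth (priv_label_not_memX hp hlp) (mem_labelSet_of_label hlp))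
    -- aL slot2
    · obtain ⟨hp, hlp⟩ := starT_label_privL.1 hx
      exact absurd (hTX (mem_labelSet_of_label hy)) (priv_label_not_memX hp hlp)
    -- aR aL
    · obtain ⟨hq, hlq⟩ := starT_label_privR.1 hx
      obtain ⟨hp', hlp'⟩ := starT_label_privL.1 hy
      exact absurd (mem_labelSet_of_label hlq) (notBoth (priv_label_not_memX hq hlq) (mem_labelSet_of_label hlp'))
    -- aR aR
    · obtain ⟨hq, hlq⟩ := starT_label_privR.1 hx
      obtain ⟨hq', hlq'⟩ := starT_label_privR.1 hy
      rw [h₂.label_inj hlq hlq']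
    -- aR slot0
    · obtain ⟨hq, hlq⟩ := starT_label_privR.1 hx
      obtain ⟨v, hv, hfv, hlv, -⟩ := starT_label_slot0 hy
      exact absurd (mem_labelSet_of_label hlq) (notBoth (priv_label_not_memX hq hlq) (mem_labelSet_of_label hlv))
    -- aR slot1
    · obtain ⟨hq, hlq⟩ := starT_label_privR.1 hx
      obtain ⟨w, hw, hgw, hlw, -⟩ := starT_label_slot1 hy
      exact absurd hw ((h₂.label_inj hlq hlw ▸ hq).2)
    -- aR slot2
    · obtain ⟨hq, hlq⟩ := starT_label_privR.1 hx
      exact absurd (hTX (mem_labelSet_of_label hy)) (priv_label_not_memX hq hlq)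
    -- slot0 aL
    · obtain ⟨v, hv, hfv, hlv, -⟩ := starT_label_slot0 hx
      obtain ⟨hp', hlp'⟩ := starT_label_privL.1 hy
      exact absurd hv ((h₁.label_inj hlp' hlv ▸ hp').2)
    -- slot0 aR
    · obtain ⟨v, hv, hfv, hlv, hnX⟩ := starT_label_slot0 hx
      obtain ⟨hq', hlq'⟩ := starT_label_privR.1 hy
      exact absurd (mem_labelSet_of_label hlq') (notBoth hnX (mem_labelSet_of_label hlv))
    -- slot0 slot0
    · obtain ⟨v, hv, hfv, hlv, -⟩ := starT_label_slot0 hx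
      obtain ⟨v', hv', hfv', hlv', -⟩ := starT_label_slot0 hy
      rw [← hfv, ← hfv', h₁.label_inj hlv hlv']
    -- slot0 slot1
    · obtain ⟨v, hv, hfv, hlv, hnX⟩ := starT_label_slot0 hx
      obtain ⟨w, hw, hgw, hlw, -⟩ := starT_label_slot1 hy
      exact absurd (mem_labelSet_of_label hlw) (notBoth hnX (mem_labelSet_of_label hlv))
    -- slot0 slot2
    · obtain ⟨v, hv, hfv, hlv, hnX⟩ := starT_label_slot0 hx
      exact absurd (hTX (mem_labelSet_of_label hy)) hnX
    -- slot1 aL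
    · obtain ⟨w, hw, hgw, hlw, hnX⟩ := starT_label_slot1 hx
      obtain ⟨hp', hlp'⟩ := starT_label_privL.1 hy
      exact absurd (mem_labelSet_of_label hlw) (notBoth hnX (mem_labelSet_of_label hlp'))
    -- slot1 aR
    · obtain ⟨w, hw, hgw, hlw, -⟩ := starT_label_slot1 hx
      obtain ⟨hq', hlq'⟩ := starT_label_privR.1 hy
      exact absurd hw ((h₂.label_inj hlq' hlw ▸ hq').2)
    -- slot1 slot0
    · obtain ⟨w, hw, hgw, hlw, hnX⟩ := starT_label_slot1 hx
      obtain ⟨v, hv, hfv, hlv, -⟩ := starT_label_slot0 hy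
      exact absurd (mem_labelSet_of_label hlw) (notBoth hnX (mem_labelSet_of_label hlv))
    -- slot1 slot1
    · obtain ⟨w, hw, hgw, hlw, -⟩ := starT_label_slot1 hx
      obtain ⟨w', hw', hgw', hlw', -⟩ := starT_label_slot1 hy
      rw [← hgw, ← hgw', h₂.label_inj hlw hlw']
    -- slot1 slot2
    · obtain ⟨w, hw, hgw, hlw, hnX⟩ := starT_label_slot1 hx
      exact absurd (hTX (mem_labelSet_of_label hy)) hnX
    -- slot2 aL
    · obtain ⟨hp', hlp'⟩ := starT_label_privL.1 hy
      exact absurd (hTX (mem_labelSet_of_label hx)) (priv_label_not_memX hp' hlp')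
    -- slot2 aR
    · obtain ⟨hq', hlq'⟩ := starT_label_privR.1 hy
      exact absurd (hTX (mem_labelSet_of_label hx)) (priv_label_not_memX hq' hlq')
    -- slot2 slot0
    · obtain ⟨v, hv, hfv, hlv, hnX⟩ := starT_label_slot0 hy
      exact absurd (hTX (mem_labelSet_of_label hx)) hnX
    -- slot2 slot1
    · obtain ⟨w, hw, hgw, hlw, hnX⟩ := starT_label_slot1 hy
      exact absurd (hTX (mem_labelSet_of_label hx)) hnX
    -- slot2 slot2
    · rw [hT.label_inj hx hy]
  · -- leaf_labeled
    rintro (_ | ((p | q) | ⟨u, i⟩)) hx hleaf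
    · exfalso
      rcases hne with ⟨p, hp⟩ | ⟨q, hq⟩
      · obtain ⟨r₁, hr₁, hall₁⟩ := h₁.rooted ⟨p, hp⟩
        by_cases hsh : r₁ ∈ (T₁.restrict X).nodes
        · obtain ⟨r, hr, hallr⟩ := hT.rooted ⟨f r₁, hf.1 r₁ hsh⟩
          exact hleaf (some (Sum.inr (r, 0))) ⟨rfl, hr, hallr⟩
        · exact hleaf (some (Sum.inl (Sum.inl r₁))) ⟨⟨hr₁, hsh⟩, hall₁⟩
      · obtain ⟨r₂, hr₂, hall₂⟩ := h₂.rooted ⟨q, hq⟩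
        by_cases hsh : r₂ ∈ (T₂.restrict X).nodes
        · obtain ⟨r, hr, hallr⟩ := hT.rooted ⟨g r₂, hg.1 r₂ hsh⟩
          exact hleaf (some (Sum.inr (r, 0))) ⟨rfl, hr, hallr⟩
        · exact hleaf (some (Sum.inl (Sum.inr r₂))) ⟨⟨hr₂, hsh⟩, hall₂⟩
    · obtain ⟨a, ha⟩ := h₁.leaf_labeled p hx.1 (fun w harc =>
        hleaf (some (Sum.inl (Sum.inl w)))
          ⟨hx, priv_of_path hx (h₁.arc_mem_right harc) (ReflTransGen.single harc), harc⟩)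
      exact ⟨a, starT_label_privL.2 ⟨hx, ha⟩⟩
    · obtain ⟨a, ha⟩ := h₂.leaf_labeled q hx.1 (fun w harc =>
        hleaf (some (Sum.inl (Sum.inr w)))
          ⟨hx, priv_of_path hx (h₂.arc_mem_right harc) (ReflTransGen.single harc), harc⟩)
      exact ⟨a, starT_label_privR.2 ⟨hx, ha⟩⟩
    · obtain ⟨hu, hi⟩ := hx
      interval_cases i
      · exact absurd (show (starT T₁ T₂ T X f g).arc (some (Sum.inr (u, 0)))
          (some (Sum.inr (u, 1))) from Or.inl ⟨rfl, hu, Or.inl ⟨rfl, rfl⟩⟩)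
          (hleaf _)
      · exact absurd (show (starT T₁ T₂ T X f g).arc (some (Sum.inr (u, 1)))
          (some (Sum.inr (u, 2))) from Or.inl ⟨rfl, hu, Or.inr ⟨rfl, rfl⟩⟩)
          (hleaf _)
      · exact hT.leaf_labeled u hu (fun w harc =>
          hleaf (some (Sum.inr (w, 0))) (Or.inr ⟨rfl, rfl, harc⟩))

end Stmt13Tree

section Stmt13WTE
open PreTree Relation Classical

variable {α V W U : Type}
variable {T₁ : PreTree α V} {T₂ : PreTree α W} {T : PreTree α U} {X : Set α}
  {f : V → U} {g : W → U}

open Classical in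
/-- The embedding of `T₁` into the glued tree. -/
noncomputable def mapL (T₁ : PreTree α V) (T : PreTree α U) (X : Set α) (f : V → U) :
    V → Option ((V ⊕ W) ⊕ (U × ℕ)) := fun v =>
  if v ∈ (T₁.restrict X).nodes then
    (if ∃ a, T₁.label v = some a ∧ a ∉ X then some (Sum.inr (f v, 0))
     else some (Sum.inr (f v, 2)))
  else some (Sum.inl (Sum.inl v))

open Classical in
/-- The embedding of `T₂` into the glued tree. -/
noncomputable def mapR (T₂ : PreTree α W) (T : PreTree α U) (X : Set α) (g : W → U) :
    W → Option ((V ⊕ W) ⊕ (U × ℕ)) := fun w =>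
  if w ∈ (T₂.restrict X).nodes then
    (if ∃ a, T₂.label w = some a ∧ a ∉ X then some (Sum.inr (g w, 1))
     else some (Sum.inr (g w, 2)))
  else some (Sum.inl (Sum.inr w))

lemma mapL_shared {v : V} (h : v ∈ (T₁.restrict X).nodes) :
    ∃ i, i ≤ 2 ∧ mapL (W := W) T₁ T X f v = some (Sum.inr (f v, i)) := by
  by_cases hex : ∃ a, T₁.label v = some a ∧ a ∉ X
  · exact ⟨0, by omega, by rw [mapL, if_pos h, if_pos hex]⟩
  · exact ⟨2, le_refl 2, by rw [mapL, if_pos h, if_neg hex]⟩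

lemma mapL_priv {v : V} (h : v ∉ (T₁.restrict X).nodes) :
    mapL (W := W) T₁ T X f v = some (Sum.inl (Sum.inl v)) := by
  rw [mapL, if_neg h]

lemma mapR_shared {w : W} (h : w ∈ (T₂.restrict X).nodes) :
    ∃ i, i ≤ 2 ∧ mapR (V := V) T₂ T X g w = some (Sum.inr (g w, i)) := by
  by_cases hex : ∃ a, T₂.label w = some a ∧ a ∉ X
  · exact ⟨1, by omega, by rw [mapR, if_pos h, if_pos hex]⟩
  · exact ⟨2, le_refl 2, by rw [mapR, if_pos h, if_neg hex]⟩

lemma mapR_priv {w : W} (h : w ∉ (T₂.restrict X).nodes) :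
    mapR (V := V) T₂ T X g w = some (Sum.inl (Sum.inr w)) := by
  rw [mapR, if_neg h]

theorem wte_mapL (h₁ : T₁.IsATree) (hT : T.IsATree)
    (hf : PreTree.IsWTE (T₁.restrict X) T f) :
    PreTree.IsWTE T₁ (starT T₁ T₂ T X f g) (mapL T₁ T X f) := by
  refine ⟨?_, ?_, ?_, ?_⟩
  · -- maps nodes to nodes
    intro v hv
    by_cases hsh : v ∈ (T₁.restrict X).nodes
    · obtain ⟨i, hi, heq⟩ := mapL_shared (T := T) (f := f) (W := W) hsh
      rw [heq]
      exact ⟨hf.1 v hsh, hi⟩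
    · rw [mapL_priv hsh]
      exact ⟨hv, hsh⟩
  · -- injective
    intro u hu v hv heq
    by_cases hshu : u ∈ (T₁.restrict X).nodes <;>
      by_cases hshv : v ∈ (T₁.restrict X).nodes
    · obtain ⟨i, hi, hequ⟩ := mapL_shared (T := T) (f := f) (W := W) hshu
      obtain ⟨j, hj, heqv⟩ := mapL_shared (T := T) (f := f) (W := W) hshv
      rw [hequ, heqv] at heq
      simp only [Option.some.injEq, Sum.inr.injEq, Prod.mk.injEq] at heq
      exact hf.2.1 u hshu v hshv heq.1
    · obtain ⟨i, hi, hequ⟩ := mapL_shared (T := T) (f := f) (W := W) hshu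
      rw [hequ, mapL_priv hshv] at heq
      simp at heq
    · obtain ⟨j, hj, heqv⟩ := mapL_shared (T := T) (f := f) (W := W) hshv
      rw [heqv, mapL_priv hshu] at heq
      simp at heq
    · rw [mapL_priv hshu, mapL_priv hshv] at heq
      simp only [Option.some.injEq, Sum.inl.injEq] at heq
      exact heq
  · -- labels
    intro v a hl
    have hvmem : v ∈ T₁.nodes := h₁.label_mem hl
    by_cases hsh : v ∈ (T₁.restrict X).nodes
    · by_cases hex : ∃ a', T₁.label v = some a' ∧ a' ∉ X
      · rw [mapL, if_pos hsh, if_pos hex]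
        obtain ⟨a', ha', hnX⟩ := hex
        rw [hl] at ha'
        cases ha'
        exact starT_label_slot0_eq hf hsh hl hnX
      · rw [mapL, if_pos hsh, if_neg hex]
        push_neg at hex
        have haX : a ∈ X := hex a hl
        exact hf.2.2.1 v a (restrict_label_eq_some.2 ⟨hl, haX⟩)
    · rw [mapL_priv hsh]
      exact starT_label_privL.2 ⟨⟨hvmem, hsh⟩, hl⟩
  · -- paths
    intro u hu v hv
    constructor
    · -- forward
      intro hpath
      by_cases hshu : u ∈ (T₁.restrict X).nodes
      · by_cases hshv : v ∈ (T₁.restrict X).nodes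
        · -- both shared
          by_cases huv : u = v
          · subst huv
            exact ReflTransGen.refl
          · have hrp : (T₁.restrict X).path u v := path_restrict hpath hshv.2
            have hTp : T.path (f u) (f v) := (hf.2.2.2 u hshu v hshv).1 hrp
            obtain ⟨i, hi, hequ⟩ := mapL_shared (T := T) (f := f) (W := W) hshu
            obtain ⟨j, hj, heqv⟩ := mapL_shared (T := T) (f := f) (W := W) hshv
            rw [hequ, heqv]
            exact star_slot_path hTp hT hi hj
              (fun heq => absurd (hf.2.1 u hshu v hshv heq) huv) (hf.1 u hshu)
        · -- u shared, v private
          obtain ⟨s, q0, hs, hq0, hps, harcsq, hqp⟩ :=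
            shared_to_priv_decomp h₁ ⟨hv, hshv⟩ hpath hshu
          have hTp : T.path (f u) (f s) :=
            (hf.2.2.2 u hshu s hs).1 (path_restrict hps hs.2)
          obtain ⟨i, hi, hequ⟩ := mapL_shared (T := T) (f := f) (W := W) hshu
          rw [hequ, mapL_priv hshv]
          refine ReflTransGen.trans (star_slot_path (i' := 2) hTp hT hi (le_refl 2)
            (fun _ => hi) (hf.1 u hshu)) ?_
          exact ReflTransGen.head (show (starT T₁ T₂ T X f g).arc
            (some (Sum.inr (f s, 2))) (some (Sum.inl (Sum.inl q0))) from
            ⟨rfl, hq0, s, hs, rfl, harcsq⟩) (star_privL_path hq0 hqp h₁)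
      · -- u private
        have hpv : priv T₁ X v := priv_of_path ⟨hu, hshu⟩ hv hpath
        rw [mapL_priv hshu, mapL_priv hpv.2]
        exact star_privL_path ⟨hu, hshu⟩ hpath h₁
    · -- backward
      intro hpath
      by_cases hshu : u ∈ (T₁.restrict X).nodes
      · by_cases hshv : v ∈ (T₁.restrict X).nodes
        · obtain ⟨i, hi, hequ⟩ := mapL_shared (T := T) (f := f) (W := W) hshu
          obtain ⟨j, hj, heqv⟩ := mapL_shared (T := T) (f := f) (W := W) hshv
          rw [hequ, heqv] at hpath
          rcases star_path_struct hpath with ⟨heq, -⟩ | hnt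
          · rw [hf.2.1 v hshv u hshu heq]
            exact ReflTransGen.refl
          · have hTp : T.path (f u) (f v) := hnt.to_reflTransGen
            exact restrict_path_le ((hf.2.2.2 u hshu v hshv).2 hTp)
        · obtain ⟨i, hi, hequ⟩ := mapL_shared (T := T) (f := f) (W := W) hshu
          rw [hequ, mapL_priv hshv] at hpath
          obtain ⟨s, q0, hs, hq0, harcsq, hqv, hTp⟩ := star_path_struct hpath
          have h1 : T₁.path u s := restrict_path_le ((hf.2.2.2 u hshu s hs).2 hTp)
          exact h1.trans (ReflTransGen.head harcsq hqv)
      · rw [mapL_priv hshu] at hpath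
        by_cases hshv : v ∈ (T₁.restrict X).nodes
        · obtain ⟨j, hj, heqv⟩ := mapL_shared (T := T) (f := f) (W := W) hshv
          rw [heqv] at hpath
          obtain ⟨q0, heq, -⟩ := star_path_struct hpath
          simp at heq
        · rw [mapL_priv hshv] at hpath
          obtain ⟨q0, heq, hq⟩ := star_path_struct hpath
          simp only [Option.some.injEq, Sum.inl.injEq] at heq
          subst heq
          exact hq

theorem wte_mapR (h₂ : T₂.IsATree) (hT : T.IsATree)
    (hg : PreTree.IsWTE (T₂.restrict X) T g) :
    PreTree.IsWTE T₂ (starT T₁ T₂ T X f g) (mapR T₂ T X g) := by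
  refine ⟨?_, ?_, ?_, ?_⟩
  · intro v hv
    by_cases hsh : v ∈ (T₂.restrict X).nodes
    · obtain ⟨i, hi, heq⟩ := mapR_shared (T := T) (g := g) (V := V) hsh
      rw [heq]
      exact ⟨hg.1 v hsh, hi⟩
    · rw [mapR_priv hsh]
      exact ⟨hv, hsh⟩
  · intro u hu v hv heq
    by_cases hshu : u ∈ (T₂.restrict X).nodes <;>
      by_cases hshv : v ∈ (T₂.restrict X).nodes
    · obtain ⟨i, hi, hequ⟩ := mapR_shared (T := T) (g := g) (V := V) hshu
      obtain ⟨j, hj, heqv⟩ := mapR_shared (T := T) (g := g) (V := V) hshv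
      rw [hequ, heqv] at heq
      simp only [Option.some.injEq, Sum.inr.injEq, Prod.mk.injEq] at heq
      exact hg.2.1 u hshu v hshv heq.1
    · obtain ⟨i, hi, hequ⟩ := mapR_shared (T := T) (g := g) (V := V) hshu
      rw [hequ, mapR_priv hshv] at heq
      simp at heq
    · obtain ⟨j, hj, heqv⟩ := mapR_shared (T := T) (g := g) (V := V) hshv
      rw [heqv, mapR_priv hshu] at heq
      simp at heq
    · rw [mapR_priv hshu, mapR_priv hshv] at heq
      simp only [Option.some.injEq, Sum.inl.injEq, Sum.inr.injEq] at heq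
      exact heq
  · intro v a hl
    have hvmem : v ∈ T₂.nodes := h₂.label_mem hl
    by_cases hsh : v ∈ (T₂.restrict X).nodes
    · by_cases hex : ∃ a', T₂.label v = some a' ∧ a' ∉ X
      · rw [mapR, if_pos hsh, if_pos hex]
        obtain ⟨a', ha', hnX⟩ := hex
        rw [hl] at ha'
        cases ha'
        exact starT_label_slot1_eq hg hsh hl hnX
      · rw [mapR, if_pos hsh, if_neg hex]
        push_neg at hex
        have haX : a ∈ X := hex a hl
        exact hg.2.2.1 v a (restrict_label_eq_some.2 ⟨hl, haX⟩)
    · rw [mapR_priv hsh]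
      exact starT_label_privR.2 ⟨⟨hvmem, hsh⟩, hl⟩
  · intro u hu v hv
    constructor
    · intro hpath
      by_cases hshu : u ∈ (T₂.restrict X).nodes
      · by_cases hshv : v ∈ (T₂.restrict X).nodes
        · by_cases huv : u = v
          · subst huv
            exact ReflTransGen.refl
          · have hrp : (T₂.restrict X).path u v := path_restrict hpath hshv.2
            have hTp : T.path (g u) (g v) := (hg.2.2.2 u hshu v hshv).1 hrp
            obtain ⟨i, hi, hequ⟩ := mapR_shared (T := T) (g := g) (V := V) hshu
            obtain ⟨j, hj, heqv⟩ := mapR_shared (T := T) (g := g) (V := V) hshv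
            rw [hequ, heqv]
            exact star_slot_path hTp hT hi hj
              (fun heq => absurd (hg.2.1 u hshu v hshv heq) huv) (hg.1 u hshu)
        · obtain ⟨s, q0, hs, hq0, hps, harcsq, hqp⟩ :=
            shared_to_priv_decompR h₂ ⟨hv, hshv⟩ hpath hshu
          have hTp : T.path (g u) (g s) :=
            (hg.2.2.2 u hshu s hs).1 (path_restrict hps hs.2)
          obtain ⟨i, hi, hequ⟩ := mapR_shared (T := T) (g := g) (V := V) hshu
          rw [hequ, mapR_priv hshv]
          refine ReflTransGen.trans (star_slot_path (i' := 2) hTp hT hi (le_refl 2)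
            (fun _ => hi) (hg.1 u hshu)) ?_
          exact ReflTransGen.head (show (starT T₁ T₂ T X f g).arc
            (some (Sum.inr (g s, 2))) (some (Sum.inl (Sum.inr q0))) from
            ⟨rfl, hq0, s, hs, rfl, harcsq⟩) (star_privR_path hq0 hqp h₂)
      · have hpv : priv T₂ X v := priv_of_path ⟨hu, hshu⟩ hv hpath
        rw [mapR_priv hshu, mapR_priv hpv.2]
        exact star_privR_path ⟨hu, hshu⟩ hpath h₂
    · intro hpath
      by_cases hshu : u ∈ (T₂.restrict X).nodes
      · by_cases hshv : v ∈ (T₂.restrict X).nodes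
        · obtain ⟨i, hi, hequ⟩ := mapR_shared (T := T) (g := g) (V := V) hshu
          obtain ⟨j, hj, heqv⟩ := mapR_shared (T := T) (g := g) (V := V) hshv
          rw [hequ, heqv] at hpath
          rcases star_path_struct hpath with ⟨heq, -⟩ | hnt
          · rw [hg.2.1 v hshv u hshu heq]
            exact ReflTransGen.refl
          · have hTp : T.path (g u) (g v) := hnt.to_reflTransGen
            exact restrict_path_le ((hg.2.2.2 u hshu v hshv).2 hTp)
        · obtain ⟨i, hi, hequ⟩ := mapR_shared (T := T) (g := g) (V := V) hshu
          rw [hequ, mapR_priv hshv] at hpath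
          obtain ⟨s, q0, hs, hq0, harcsq, hqv, hTp⟩ := star_path_struct hpath
          have h1 : T₂.path u s := restrict_path_le ((hg.2.2.2 u hshu s hs).2 hTp)
          exact h1.trans (ReflTransGen.head harcsq hqv)
      · rw [mapR_priv hshu] at hpath
        by_cases hshv : v ∈ (T₂.restrict X).nodes
        · obtain ⟨j, hj, heqv⟩ := mapR_shared (T := T) (g := g) (V := V) hshv
          rw [heqv] at hpath
          obtain ⟨q0, heq, -⟩ := star_path_struct hpath
          simp at heq
        · rw [mapR_priv hshv] at hpath
          obtain ⟨q0, heq, hq⟩ := star_path_struct hpath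
          simp only [Option.some.injEq, Sum.inl.injEq, Sum.inr.injEq] at heq
          subst heq
          exact hq

end Stmt13WTE

section Stmt13Final
open PreTree Relation Classical

variable {α V W U : Type}

/-- A WTE into `T` whose source is a restriction factors through `T.restrict X`. -/
lemma wte_into_restrict {T₁ : PreTree α V} {T : PreTree α U} {X : Set α} {f : V → U}
    (h₁ : T₁.IsATree) (hf : PreTree.IsWTE (T₁.restrict X) T f) :
    PreTree.IsWTE (T₁.restrict X) (T.restrict X) f := by
  have hmaps : ∀ v ∈ (T₁.restrict X).nodes, f v ∈ (T.restrict X).nodes := by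
    intro v hv
    obtain ⟨a, ⟨w, hpath, hlw⟩, haX⟩ := hv.2
    have hwmem : w ∈ (T₁.restrict X).nodes :=
      ⟨h₁.label_mem hlw, ⟨a, ⟨w, ReflTransGen.refl, hlw⟩, haX⟩⟩
    have hrp : (T₁.restrict X).path v w := path_restrict hpath hwmem.2
    have hTp : T.path (f v) (f w) := (hf.2.2.2 v hv w hwmem).1 hrp
    have hTl : T.label (f w) = some a :=
      hf.2.2.1 w a (restrict_label_eq_some.2 ⟨hlw, haX⟩)
    exact ⟨hf.1 v hv, ⟨a, ⟨f w, hTp, hTl⟩, haX⟩⟩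
  refine ⟨hmaps, hf.2.1, ?_, ?_⟩
  · intro v a hl
    exact restrict_label_eq_some.2
      ⟨hf.2.2.1 v a hl, restrict_labelSet_subset ⟨v, hl⟩⟩
  · intro u hu v hv
    rw [hf.2.2.2 u hu v hv]
    exact ⟨fun h => path_restrict h (hmaps v hv).2, fun h => restrict_path_le h⟩

lemma wte_of_no_nodes {S : PreTree α V} {T : PreTree α U} {f : V → U}
    (hS : S.IsATree) (h : ¬ S.nodes.Nonempty) : PreTree.IsWTE S T f := by
  refine ⟨fun v hv => absurd ⟨v, hv⟩ h, fun u hu => absurd ⟨u, hu⟩ h,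
    fun v a hl => absurd ⟨v, hS.label_mem hl⟩ h, fun u hu => absurd ⟨u, hu⟩ h⟩

end Stmt13Final

/-- Two 𝒜-trees are ancestrally compatible iff their restrictions to the
common label set are ancestrally compatible. -/
theorem stmt13 {α V W : Type} (T₁ : PreTree α V) (T₂ : PreTree α W)
    (h₁ : T₁.IsATree) (h₂ : T₂.IsATree) :
    PreTree.AncCompat T₁ T₂ ↔
      PreTree.AncCompat (T₁.restrict (T₁.labelSet ∩ T₂.labelSet))
        (T₂.restrict (T₁.labelSet ∩ T₂.labelSet)) := by
  constructor
  · rintro ⟨U, T, hT, ⟨f, hf⟩, ⟨g, hg⟩⟩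
    exact ⟨U, T, hT, ⟨f ∘ id, wte_comp wte_restrict_id hf⟩,
      ⟨g ∘ id, wte_comp wte_restrict_id hg⟩⟩
  · rintro ⟨U, T, hT, ⟨f, hf⟩, ⟨g, hg⟩⟩
    by_cases hne : T₁.nodes.Nonempty ∨ T₂.nodes.Nonempty
    · refine ⟨_, starT T₁ T₂ (T.restrict (T₁.labelSet ∩ T₂.labelSet))
        (T₁.labelSet ∩ T₂.labelSet) f g,
        isATree_starT h₁ h₂ (isATree_restrict hT)
          (wte_into_restrict h₁ hf) (wte_into_restrict h₂ hg)
          restrict_labelSet_subset (subset_refl _) hne,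
        ⟨mapL T₁ (T.restrict (T₁.labelSet ∩ T₂.labelSet))
          (T₁.labelSet ∩ T₂.labelSet) f,
          wte_mapL h₁ (isATree_restrict hT) (wte_into_restrict h₁ hf)⟩,
        ⟨mapR T₂ (T.restrict (T₁.labelSet ∩ T₂.labelSet))
          (T₁.labelSet ∩ T₂.labelSet) g,
          wte_mapR h₂ (isATree_restrict hT) (wte_into_restrict h₂ hg)⟩⟩
    · exact ⟨U, T, hT, ⟨f, wte_of_no_nodes h₁ (fun hn => hne (Or.inl hn))⟩,
        ⟨g, wte_of_no_nodes h₂ (fun hn => hne (Or.inr hn))⟩⟩
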